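/- arXiv:2205.08880 — 2 statements merged into one kernel-verified Lean document; each statement's English description precedes it below -/
import Mathlib

section
/- Let G be a group acting on a unital k-algebra A, let U ⊆ G be a subgroup, and let σ: U\G → G be a set-theoretic section of the projection G → U\G. Then the k-linear map ι_σ: (A⋊U)⟨U\G⟩ → A⟨G⟩⋊U sending (u_g a)⟨x⟩ to u_g (a⟨σ(x)⟩) is a homomorphism of k-algebras. -/
/-- The crossed product `A⋊U`, modelled as `U →₀ A`, with multiplication
`(u_g a)(u_h b) = u_{gh} h⁻¹(a) b`. -/
noncomputable def crossMulAU {k A G : Type*} [Field k] [Ring A] [Algebra k A]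
    [Group G] (ρ : G →* (A ≃ₐ[k] A)) (U : Subgroup G) :
    (U →₀ A) → (U →₀ A) → (U →₀ A) :=
  fun f f' => f.sum fun g a => f'.sum fun h b =>
    Finsupp.single (g * h) (ρ ((h : G)⁻¹) a * b)

/-- The multiplication of `(A⋊U)⟨U\G⟩ = (A⋊U) ⊗ k⟨U\G⟩`, modelled as
`U\G →₀ (U →₀ A)`: `(b⟨x⟩)(b'⟨y⟩) = (b·b')⟨y⟩` with `b·b'` the crossed product
multiplication. -/
noncomputable def crossCosetMul {k A G : Type*} [Field k] [Ring A] [Algebra k A]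
    [Group G] (ρ : G →* (A ≃ₐ[k] A)) (U : Subgroup G) :
    (Quotient (QuotientGroup.rightRel U) →₀ (U →₀ A)) →
    (Quotient (QuotientGroup.rightRel U) →₀ (U →₀ A)) →
    (Quotient (QuotientGroup.rightRel U) →₀ (U →₀ A)) :=
  fun F F' => F.sum fun _ b => F'.sum fun y b' =>
    Finsupp.single y (crossMulAU ρ U b b')

/-- The multiplication of `A⟨G⟩ = A ⊗ k⟨G⟩`, modelled as `G →₀ A`. -/
noncomputable def mulAG {A G : Type*} [Ring A] :
    (G →₀ A) → (G →₀ A) → (G →₀ A) :=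
  fun f f' => f.sum fun _ a => f'.sum fun γ b => Finsupp.single γ (a * b)

/-- The diagonal action of `h ∈ G` on `A⟨G⟩`: `h(a⟨γ⟩) = h(a)⟨hγ⟩`. -/
noncomputable def actAG {k A G : Type*} [Field k] [Ring A] [Algebra k A]
    [Group G] (ρ : G →* (A ≃ₐ[k] A)) (h : G) : (G →₀ A) → (G →₀ A) :=
  fun f => Finsupp.mapDomain (fun γ => h * γ)
    (Finsupp.mapRange (fun a => ρ h a) (map_zero _) f)

/-- The crossed product `A⟨G⟩⋊U`, modelled as `U →₀ (G →₀ A)`, with multiplication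
`(u_g b)(u_h b') = u_{gh} h⁻¹(b) b'`, where `U` acts diagonally on `A⟨G⟩`. -/
noncomputable def crossMulB {k A G : Type*} [Field k] [Ring A] [Algebra k A]
    [Group G] (ρ : G →* (A ≃ₐ[k] A)) (U : Subgroup G) :
    (U →₀ (G →₀ A)) → (U →₀ (G →₀ A)) → (U →₀ (G →₀ A)) :=
  fun F F' => F.sum fun g b => F'.sum fun h b' =>
    Finsupp.single (g * h) (mulAG (actAG ρ ((h : G)⁻¹) b) b')

/-- The linear map `ι_σ : (A⋊U)⟨U\G⟩ → A⟨G⟩⋊U`, `(u_g a)⟨x⟩ ↦ u_g (a⟨σ(x)⟩)`. -/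
noncomputable def iotaSigma {A G : Type*} [Ring A] [Group G] (U : Subgroup G)
    (σ : Quotient (QuotientGroup.rightRel U) → G) :
    (Quotient (QuotientGroup.rightRel U) →₀ (U →₀ A)) → (U →₀ (G →₀ A)) :=
  fun F => F.sum fun x b => b.sum fun u a =>
    Finsupp.single u (Finsupp.single (σ x) a)


section Aux

variable {k A G : Type*} [Field k] [Ring A] [Algebra k A] [Group G]
  (ρ : G →* (A ≃ₐ[k] A)) (U : Subgroup G)

lemma iotaSigma_add (σ : Quotient (QuotientGroup.rightRel U) → G)
    (F F' : Quotient (QuotientGroup.rightRel U) →₀ (U →₀ A)) :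
    iotaSigma U σ (F + F') = iotaSigma U σ F + iotaSigma U σ F' := by
  unfold iotaSigma
  rw [Finsupp.sum_add_index']
  · intro x; simp
  · intro x b b'
    rw [Finsupp.sum_add_index'] <;> simp [Finsupp.single_add]

/-- `iotaSigma` as an `AddMonoidHom`. -/
noncomputable def iotaHom (σ : Quotient (QuotientGroup.rightRel U) → G) :
    (Quotient (QuotientGroup.rightRel U) →₀ (U →₀ A)) →+ (U →₀ (G →₀ A)) :=
  { toFun := iotaSigma U σ
    map_zero' := by simp [iotaSigma]
    map_add' := iotaSigma_add U σ }

lemma iota_single (σ : Quotient (QuotientGroup.rightRel U) → G)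
    (y : Quotient (QuotientGroup.rightRel U)) (c : U →₀ A) :
    iotaSigma U σ (Finsupp.single y c)
      = c.sum fun u a => Finsupp.single u (Finsupp.single (σ y) a) := by
  unfold iotaSigma
  rw [Finsupp.sum_single_index]
  simp

lemma actAG_single (h : G) (γ : G) (a : A) :
    actAG ρ h (Finsupp.single γ a) = Finsupp.single (h * γ) (ρ h a) := by
  unfold actAG
  rw [Finsupp.mapRange_single, Finsupp.mapDomain_single]

lemma mulAG_single (γ γ' : G) (a b : A) :
    mulAG (Finsupp.single γ a) (Finsupp.single γ' b)
      = Finsupp.single γ' (a * b) := by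
  unfold mulAG
  rw [Finsupp.sum_single_index, Finsupp.sum_single_index] <;> simp

lemma crossMulB_add_left (F₁ F₂ F' : U →₀ (G →₀ A)) :
    crossMulB ρ U (F₁ + F₂) F'
      = crossMulB ρ U F₁ F' + crossMulB ρ U F₂ F' := by
  unfold crossMulB
  rw [Finsupp.sum_add_index']
  · intro g
    simp [actAG, mulAG, Finsupp.sum_zero_index]
  · intro g b₁ b₂
    rw [← Finsupp.sum_add]
    congr 1; ext h b'
    rw [← Finsupp.single_add]
    congr 1
    unfold actAG mulAG
    rw [Finsupp.mapRange_add, Finsupp.mapDomain_add, Finsupp.sum_add_index'] <;>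
      simp [add_mul, Finsupp.single_add, Finsupp.sum_add]

lemma crossMulB_add_right (F F₁ F₂ : U →₀ (G →₀ A)) :
    crossMulB ρ U F (F₁ + F₂)
      = crossMulB ρ U F F₁ + crossMulB ρ U F F₂ := by
  unfold crossMulB
  rw [← Finsupp.sum_add]
  congr 1; ext g b
  rw [Finsupp.sum_add_index']
  · intro h
    simp [mulAG]
  · intro h b₁ b₂
    rw [← Finsupp.single_add]
    congr 1
    unfold mulAG
    rw [← Finsupp.sum_add]
    congr 1; ext γ a
    rw [Finsupp.sum_add_index'] <;> simp [mul_add, Finsupp.single_add]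

/-- `crossMulB` with fixed right factor, as an `AddMonoidHom`. -/
noncomputable def crossMulBL (F' : U →₀ (G →₀ A)) :
    (U →₀ (G →₀ A)) →+ (U →₀ (G →₀ A)) :=
  { toFun := fun F => crossMulB ρ U F F'
    map_zero' := by simp [crossMulB]
    map_add' := fun F₁ F₂ => crossMulB_add_left ρ U F₁ F₂ F' }

/-- `crossMulB` with fixed left factor, as an `AddMonoidHom`. -/
noncomputable def crossMulBR (F : U →₀ (G →₀ A)) :
    (U →₀ (G →₀ A)) →+ (U →₀ (G →₀ A)) :=
  { toFun := fun F' => crossMulB ρ U F F'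
    map_zero' := by simp [crossMulB]
    map_add' := fun F₁ F₂ => crossMulB_add_right ρ U F F₁ F₂ }

lemma crossMulB_single_single (g h : U) (γ γ' : G) (a b : A) :
    crossMulB ρ U (Finsupp.single g (Finsupp.single γ a))
        (Finsupp.single h (Finsupp.single γ' b))
      = Finsupp.single (g * h)
          (Finsupp.single γ' (ρ ((h : G)⁻¹) a * b)) := by
  unfold crossMulB
  rw [Finsupp.sum_single_index, Finsupp.sum_single_index]
  · rw [actAG_single, mulAG_single]
  · simp [mulAG]
  · simp [mulAG, actAG, Finsupp.sum_zero_index]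

lemma iota_single_single (σ : Quotient (QuotientGroup.rightRel U) → G)
    (y : Quotient (QuotientGroup.rightRel U)) (u : U) (a : A) :
    iotaSigma U σ (Finsupp.single y (Finsupp.single u a))
      = Finsupp.single u (Finsupp.single (σ y) a) := by
  rw [iota_single, Finsupp.sum_single_index]
  simp

lemma iota_single_crossMulAU (σ : Quotient (QuotientGroup.rightRel U) → G)
    (y : Quotient (QuotientGroup.rightRel U)) (b b' : U →₀ A) :
    iotaSigma U σ (Finsupp.single y (crossMulAU ρ U b b'))
      = b.sum fun g a => b'.sum fun h c =>
          Finsupp.single (g * h)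
            (Finsupp.single (σ y) (ρ ((h : G)⁻¹) a * c)) := by
  show ((iotaHom U σ).comp (Finsupp.singleAddHom y)) (crossMulAU ρ U b b') = _
  unfold crossMulAU
  rw [map_finsuppSum]
  refine Finsupp.sum_congr fun g _ => ?_
  rw [map_finsuppSum]
  refine Finsupp.sum_congr fun h _ => ?_
  exact iota_single_single U σ y _ _

lemma crossMulAU_single_single (g h : U) (a b : A) :
    crossMulAU ρ U (Finsupp.single g a) (Finsupp.single h b)
      = Finsupp.single (g * h) (ρ ((h : G)⁻¹) a * b) := by
  unfold crossMulAU
  rw [Finsupp.sum_single_index, Finsupp.sum_single_index] <;> simp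

end Aux

/-- given a set-theoretic section `σ : U\G → G` of the projection
`G → U\G`, the map `ι_σ : (A⋊U)⟨U\G⟩ → A⟨G⟩⋊U` is a homomorphism of
`k`-algebras. -/
theorem stmt8 (k A G : Type*) [Field k] [Ring A] [Algebra k A] [Group G]
    (ρ : G →* (A ≃ₐ[k] A)) (U : Subgroup G)
    (σ : Quotient (QuotientGroup.rightRel U) → G)
    (hσ : ∀ x : Quotient (QuotientGroup.rightRel U), Quotient.mk'' (σ x) = x) :
    (∀ F F' : Quotient (QuotientGroup.rightRel U) →₀ (U →₀ A),
      iotaSigma U σ (F + F') = iotaSigma U σ F + iotaSigma U σ F') ∧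
    (∀ (r : k) (F : Quotient (QuotientGroup.rightRel U) →₀ (U →₀ A)),
      iotaSigma U σ (r • F) = r • iotaSigma U σ F) ∧
    (∀ F F' : Quotient (QuotientGroup.rightRel U) →₀ (U →₀ A),
      iotaSigma U σ (crossCosetMul ρ U F F')
        = crossMulB ρ U (iotaSigma U σ F) (iotaSigma U σ F')) := by
  refine ⟨iotaSigma_add U σ, ?_, ?_⟩
  · intro r F
    unfold iotaSigma
    rw [Finsupp.sum_smul_index', Finsupp.smul_sum]
    · refine Finsupp.sum_congr fun x _ => ?_
      rw [Finsupp.sum_smul_index', Finsupp.smul_sum]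
      · refine Finsupp.sum_congr fun u a => ?_
        rw [Finsupp.smul_single, Finsupp.smul_single]
      · intro u; simp
    · intro x; simp
  · intro F F'
    have e1 : iotaSigma U σ F = F.sum fun x b => b.sum fun g a =>
        Finsupp.single g (Finsupp.single (σ x) a) := rfl
    have e1' : iotaSigma U σ F' = F'.sum fun y b' => b'.sum fun h c =>
        Finsupp.single h (Finsupp.single (σ y) c) := rfl
    have swap : ∀ X Y : U →₀ (G →₀ A),
        crossMulBL ρ U X Y = crossMulBR ρ U Y X := fun _ _ => rfl
    have hR : crossMulB ρ U (iotaSigma U σ F) (iotaSigma U σ F')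
        = F.sum fun _ b => b.sum fun g a => F'.sum fun y b' => b'.sum fun h c =>
            Finsupp.single (g * h)
              (Finsupp.single (σ y) (ρ ((h : G)⁻¹) a * c)) := by
      show crossMulBL ρ U (iotaSigma U σ F') (iotaSigma U σ F) = _
      rw [e1, map_finsuppSum]
      refine Finsupp.sum_congr fun x _ => ?_
      rw [map_finsuppSum]
      refine Finsupp.sum_congr fun g _ => ?_
      rw [swap, e1', map_finsuppSum]
      refine Finsupp.sum_congr fun y _ => ?_
      rw [map_finsuppSum]
      refine Finsupp.sum_congr fun h _ => ?_
      exact crossMulB_single_single ρ U _ _ _ _ _ _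
    have hL : iotaSigma U σ (crossCosetMul ρ U F F')
        = F.sum fun _ b => F'.sum fun y b' => b.sum fun g a => b'.sum fun h c =>
            Finsupp.single (g * h)
              (Finsupp.single (σ y) (ρ ((h : G)⁻¹) a * c)) := by
      show iotaHom U σ (crossCosetMul ρ U F F') = _
      unfold crossCosetMul
      rw [map_finsuppSum]
      refine Finsupp.sum_congr fun x _ => ?_
      rw [map_finsuppSum]
      refine Finsupp.sum_congr fun y _ => ?_
      exact iota_single_crossMulAU ρ U σ y _ _
    rw [hL, hR]
    refine Finsupp.sum_congr fun x b => ?_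
    exact Finsupp.sum_comm _ _ _
end

section
/- Let G be a group acting on a unital k-algebra A and U ⊆ G a subgroup with a section σ: U\G → G of G → U\G. Then the k-linear map kU ⊗_k A⟨U\G⟩ ⊗_k kU → A⟨G⟩⋊U sending u_g ⊗ (a⟨x⟩) ⊗ u_h to u_{gh} h⁻¹(a)⟨h⁻¹σ(x)⟩ is a bijection; in particular A⟨G⟩⋊U is a free kU-bimodule. -/
noncomputable def thetaMap {k A G : Type*} [Field k] [Ring A] [Algebra k A]
    [Group G] (ρ : G →* (A ≃ₐ[k] A)) (U : Subgroup G)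
    (σ : Quotient (QuotientGroup.rightRel U) → G) :
    ((U × Quotient (QuotientGroup.rightRel U) × U) →₀ A) → (U →₀ (G →₀ A)) :=
  fun F => F.sum fun t a =>
    Finsupp.single (t.1 * t.2.2)
      (Finsupp.single (((t.2.2 : G))⁻¹ * σ t.2.1) (ρ ((t.2.2 : G))⁻¹ a))

section Aux
variable {k A G : Type*} [Field k] [Ring A] [Algebra k A] [Group G]
  (ρ : G →* (A ≃ₐ[k] A)) (U : Subgroup G)
  (σ : Quotient (QuotientGroup.rightRel U) → G)
  (hσ : ∀ x : Quotient (QuotientGroup.rightRel U), Quotient.mk'' (σ x) = x)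

include hσ in
lemma memU_aux (y : G) : σ (Quotient.mk'' y) * y⁻¹ ∈ U := by
  have h := hσ (Quotient.mk'' y)
  rw [Quotient.eq'', QuotientGroup.rightRel_apply] at h
  simpa using U.inv_mem h

noncomputable def psiMap : (U →₀ (G →₀ A)) → ((U × Quotient (QuotientGroup.rightRel U) × U) →₀ A) :=
  fun K => K.sum fun w f => f.sum fun y a =>
    Finsupp.single
      (w * (⟨σ (Quotient.mk'' y) * y⁻¹, memU_aux U σ hσ y⟩ : U)⁻¹, Quotient.mk'' y,
        (⟨σ (Quotient.mk'' y) * y⁻¹, memU_aux U σ hσ y⟩ : U))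
      (ρ (σ (Quotient.mk'' y) * y⁻¹) a)

lemma theta_single (t : U × Quotient (QuotientGroup.rightRel U) × U) (a : A) :
    thetaMap ρ U σ (Finsupp.single t a) =
      Finsupp.single (t.1 * t.2.2)
        (Finsupp.single (((t.2.2 : G))⁻¹ * σ t.2.1) (ρ ((t.2.2 : G))⁻¹ a)) := by
  unfold thetaMap
  rw [Finsupp.sum_single_index]
  simp

lemma theta_add (F F' : (U × Quotient (QuotientGroup.rightRel U) × U) →₀ A) :
    thetaMap ρ U σ (F + F') = thetaMap ρ U σ F + thetaMap ρ U σ F' := by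
  classical
  unfold thetaMap
  rw [Finsupp.sum_add_index]
  · intro t _; simp
  · intro t _ a b; simp [map_add]

lemma theta_smul (r : k) (F : (U × Quotient (QuotientGroup.rightRel U) × U) →₀ A) :
    thetaMap ρ U σ (r • F) = r • thetaMap ρ U σ F := by
  unfold thetaMap
  rw [Finsupp.sum_smul_index', Finsupp.smul_sum]
  · congr 1; funext t a
    rw [map_smul, Finsupp.smul_single, Finsupp.smul_single]
  · intro t; simp

lemma psi_add (K K' : U →₀ (G →₀ A)) :
    psiMap ρ U σ hσ (K + K') = psiMap ρ U σ hσ K + psiMap ρ U σ hσ K' := by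
  classical
  unfold psiMap
  rw [Finsupp.sum_add_index]
  · intro w _; simp
  · intro w _ f g
    rw [Finsupp.sum_add_index]
    · intro y _; simp
    · intro y _ a b; simp [map_add, Finsupp.single_add]

lemma psi_single (w : U) (y : G) (a : A) :
    psiMap ρ U σ hσ (Finsupp.single w (Finsupp.single y a)) =
      Finsupp.single
        (w * (⟨σ (Quotient.mk'' y) * y⁻¹, memU_aux U σ hσ y⟩ : U)⁻¹, Quotient.mk'' y,
          (⟨σ (Quotient.mk'' y) * y⁻¹, memU_aux U σ hσ y⟩ : U))
        (ρ (σ (Quotient.mk'' y) * y⁻¹) a) := by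
  unfold psiMap
  rw [Finsupp.sum_single_index, Finsupp.sum_single_index]
  · simp
  · simp


lemma psi_theta (F : (U × Quotient (QuotientGroup.rightRel U) × U) →₀ A) :
    psiMap ρ U σ hσ (thetaMap ρ U σ F) = F := by
  induction F using Finsupp.induction with
  | zero => unfold thetaMap psiMap; simp
  | single_add t a F ht ha ih =>
    rw [theta_add, psi_add, ih, theta_single, psi_single]
    congr 1
    obtain ⟨g, x, h⟩ := t
    have hy : Quotient.mk'' ((h : G)⁻¹ * σ x) = x := by
      refine Eq.trans ?_ (hσ x)
      rw [Quotient.eq'', QuotientGroup.rightRel_apply]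
      simpa [mul_inv_rev, ← mul_assoc] using h.2
    have hh : (⟨σ (Quotient.mk'' ((h : G)⁻¹ * σ x)) * ((h : G)⁻¹ * σ x)⁻¹,
        memU_aux U σ hσ _⟩ : U) = h := by
      apply Subtype.ext
      simp [hy, mul_inv_rev, ← mul_assoc]
    rw [hh, hy]
    rw [show σ x * ((h : G)⁻¹ * σ x)⁻¹ = (h : G) by simp [mul_inv_rev, ← mul_assoc]]
    rw [show ((ρ (h:G)) ((ρ ((h:G))⁻¹) a)) = a by
      rw [map_inv]; exact AlgEquiv.apply_symm_apply (ρ (h:G)) a]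
    rw [mul_inv_cancel_right]

lemma theta_psi_single (w : U) (f : G →₀ A) :
    thetaMap ρ U σ (psiMap ρ U σ hσ (Finsupp.single w f)) = Finsupp.single w f := by
  induction f using Finsupp.induction with
  | zero => unfold thetaMap psiMap; simp
  | single_add y a f hy0 ha0 ih2 =>
    rw [Finsupp.single_add, psi_add, theta_add, ih2, psi_single, theta_single]
    congr 1
    dsimp only
    rw [inv_mul_cancel_right]
    congr 1
    have h1 : ((⟨σ (Quotient.mk'' y) * y⁻¹, memU_aux U σ hσ y⟩ : U) : G)⁻¹ *
        σ (Quotient.mk'' y) = y := by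
      simp [mul_inv_rev, mul_assoc]
    rw [h1]
    congr 1
    rw [map_inv]
    exact AlgEquiv.symm_apply_apply _ a

lemma theta_psi (K : U →₀ (G →₀ A)) :
    thetaMap ρ U σ (psiMap ρ U σ hσ K) = K := by
  induction K using Finsupp.induction with
  | zero => unfold thetaMap psiMap; simp
  | single_add w f K hw hf ih =>
    rw [psi_add, theta_add, ih, theta_psi_single]

end Aux

/-- given a section `σ : U\G → G` of the coset projection, the
`k`-linear map `kU ⊗_k A⟨U\G⟩ ⊗_k kU → A⟨G⟩⋊U`,
`u_g ⊗ (a⟨x⟩) ⊗ u_h ↦ u_{gh} h⁻¹(a)⟨h⁻¹σ(x)⟩`, is a bijection; in particular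
`A⟨G⟩⋊U` is a free `kU`-bimodule. -/
theorem stmt9 (k A G : Type*) [Field k] [Ring A] [Algebra k A] [Group G]
    (ρ : G →* (A ≃ₐ[k] A)) (U : Subgroup G)
    (σ : Quotient (QuotientGroup.rightRel U) → G)
    (hσ : ∀ x : Quotient (QuotientGroup.rightRel U), Quotient.mk'' (σ x) = x) :
    (∀ F F' : (U × Quotient (QuotientGroup.rightRel U) × U) →₀ A,
      thetaMap ρ U σ (F + F') = thetaMap ρ U σ F + thetaMap ρ U σ F') ∧
    (∀ (r : k) (F : (U × Quotient (QuotientGroup.rightRel U) × U) →₀ A),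
      thetaMap ρ U σ (r • F) = r • thetaMap ρ U σ F) ∧
    Function.Bijective (thetaMap ρ U σ) := by
  refine ⟨theta_add ρ U σ, theta_smul ρ U σ, ?_⟩
  exact Function.bijective_iff_has_inverse.mpr
    ⟨psiMap ρ U σ hσ, psi_theta ρ U σ hσ, theta_psi ρ U σ hσ⟩
end
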